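/- If the edge polytope P_G of a finite connected simple graph G is decomposable, then G contains a cycle of length 4. -/

import Mathlib

open scoped BigOperators

/-- `ρ(i,j) = e_i + e_j` -/
noncomputable def rho {d : ℕ} (i j : Fin d) : Fin d → ℝ :=
  fun t => (if t = i then 1 else 0) + (if t = j then 1 else 0)

/-- The edge polytope of a graph `G` on `[d]`. -/
noncomputable def edgePolytope {d : ℕ} (G : SimpleGraph (Fin d)) : Set (Fin d → ℝ) :=
  convexHull ℝ {x | ∃ i j, G.Adj i j ∧ x = rho i j}

/-- dot product -/
def dotp {d : ℕ} (a x : Fin d → ℝ) : ℝ := ∑ t, a t * x t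

/-- a polytope is integral if all its vertices (extreme points) are lattice points -/
def IsIntegralSet {d : ℕ} (P : Set (Fin d → ℝ)) : Prop :=
  ∀ x ∈ Set.extremePoints ℝ P, ∀ t, ∃ z : ℤ, x t = (z : ℝ)

/-- The hyperplane `a·x = b` decomposes `P`: it meets the relative interior of `P`,
both open sides meet `P`, and both closed half-space pieces are integral. -/
def Decomposes {d : ℕ} (P : Set (Fin d → ℝ)) (a : Fin d → ℝ) (b : ℝ) : Prop :=
  (∃ x ∈ intrinsicInterior ℝ P, dotp a x = b) ∧
  (∃ y ∈ P, dotp a y < b) ∧ (∃ y ∈ P, b < dotp a y) ∧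
  IsIntegralSet (P ∩ {x | b ≤ dotp a x}) ∧
  IsIntegralSet (P ∩ {x | dotp a x ≤ b})

lemma rho_nonneg {d : ℕ} (i j t : Fin d) : 0 ≤ rho i j t := by
  unfold rho; positivity

lemma rho_le_one {d : ℕ} {i j : Fin d} (h : i ≠ j) (t : Fin d) : rho i j t ≤ 1 := by
  unfold rho
  rcases eq_or_ne t i with rfl | hti
  · simp [h]
  · rcases eq_or_ne t j with rfl | htj
    · simp [hti]
    · simp [hti, htj]

lemma rho_left {d : ℕ} {i j : Fin d} (h : i ≠ j) : rho i j i = 1 := by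
  simp [rho, h]

lemma rho_right {d : ℕ} {i j : Fin d} (h : i ≠ j) : rho i j j = 1 := by
  simp [rho, h.symm]

lemma rho_eq_zero {d : ℕ} {i j t : Fin d} (h1 : t ≠ i) (h2 : t ≠ j) : rho i j t = 0 := by
  simp [rho, h1, h2]

lemma rho_comm {d : ℕ} (i j : Fin d) : rho i j = rho j i := by
  funext t; simp [rho, add_comm]

lemma sum_rho {d : ℕ} {i j : Fin d} (h : i ≠ j) : ∑ t, rho i j t = 2 := by
  simp [rho, Finset.sum_add_distrib, Finset.sum_ite_eq']
  norm_num

lemma dotp_rho {d : ℕ} (a : Fin d → ℝ) (i j : Fin d) : dotp a (rho i j) = a i + a j := by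
  simp [dotp, rho, mul_add, Finset.sum_add_distrib, mul_ite, mul_one, mul_zero,
    Finset.sum_ite_eq']

lemma dotp_comb {d : ℕ} (a u v : Fin d → ℝ) (c c' : ℝ) :
    dotp a (c • u + c' • v) = c * dotp a u + c' * dotp a v := by
  unfold dotp
  simp only [Pi.add_apply, Pi.smul_apply, smul_eq_mul, mul_add]
  rw [Finset.sum_add_distrib, Finset.mul_sum, Finset.mul_sum]
  congr 1 <;> exact Finset.sum_congr rfl (fun t _ => by ring)

lemma continuous_dotp {d : ℕ} (a : Fin d → ℝ) : Continuous (dotp a) := by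
  unfold dotp
  exact continuous_finset_sum _ (fun t _ => continuous_const.mul (continuous_apply t))

lemma S_finite {d : ℕ} (G : SimpleGraph (Fin d)) :
    Set.Finite {x : Fin d → ℝ | ∃ i j, G.Adj i j ∧ x = rho i j} := by
  apply Set.Finite.subset (Set.finite_range fun p : Fin d × Fin d => rho p.1 p.2)
  rintro x ⟨i, j, -, rfl⟩; exact ⟨(i, j), rfl⟩

lemma mem_nonneg {d : ℕ} {G : SimpleGraph (Fin d)} {z : Fin d → ℝ}
    (hz : z ∈ edgePolytope G) (t : Fin d) : 0 ≤ z t := by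
  have hsub : edgePolytope G ⊆ {x | ∀ u, 0 ≤ x u} := by
    apply convexHull_min
    · rintro x ⟨i, j, -, rfl⟩ u; exact rho_nonneg _ _ _
    · intro x hx y hy α β hα hβ hab u
      have := add_nonneg (mul_nonneg hα (hx u)) (mul_nonneg hβ (hy u))
      simpa using this
  exact hsub hz t

lemma mem_sum_two {d : ℕ} {G : SimpleGraph (Fin d)} {z : Fin d → ℝ}
    (hz : z ∈ edgePolytope G) : ∑ t, z t = 2 := by
  have hsub : edgePolytope G ⊆ {x | ∑ t, x t = 2} := by
    apply convexHull_min
    · rintro x ⟨i, j, hij, rfl⟩; exact sum_rho hij.ne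
    · intro x hx y hy α β hα hβ hab
      simp only [Set.mem_setOf_eq] at hx hy ⊢
      have : ∑ t, (α • x + β • y) t = α * ∑ t, x t + β * ∑ t, y t := by
        simp [Finset.sum_add_distrib, Finset.mul_sum]
      rw [this, hx, hy]; linarith
  exact hsub hz

lemma convex_ge {d : ℕ} (a : Fin d → ℝ) (b : ℝ) : Convex ℝ {x : Fin d → ℝ | b ≤ dotp a x} := by
  intro x hx y hy α β hα hβ hab
  simp only [Set.mem_setOf_eq] at hx hy ⊢
  rw [dotp_comb]
  have h1 := mul_le_mul_of_nonneg_left hx hα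
  have h2 := mul_le_mul_of_nonneg_left hy hβ
  have h3 : α * b + β * b = b := by rw [← add_mul, hab, one_mul]
  linarith

lemma convex_le {d : ℕ} (a : Fin d → ℝ) (b : ℝ) : Convex ℝ {x : Fin d → ℝ | dotp a x ≤ b} := by
  intro x hx y hy α β hα hβ hab
  simp only [Set.mem_setOf_eq] at hx hy ⊢
  rw [dotp_comb]
  have h1 := mul_le_mul_of_nonneg_left hx hα
  have h2 := mul_le_mul_of_nonneg_left hy hβ
  have h3 : α * b + β * b = b := by rw [← add_mul, hab, one_mul]
  linarith

lemma isClosed_ge {d : ℕ} (a : Fin d → ℝ) (b : ℝ) : IsClosed {x : Fin d → ℝ | b ≤ dotp a x} :=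
  isClosed_le continuous_const (continuous_dotp a)

lemma isClosed_le' {d : ℕ} (a : Fin d → ℝ) (b : ℝ) : IsClosed {x : Fin d → ℝ | dotp a x ≤ b} :=
  isClosed_le (continuous_dotp a) continuous_const

/-- From a point of the convex hull, extract a generator positive at `t0`,
supported in `T`, and dominated by `x`. -/
lemma witness {d : ℕ} {F : Set (Fin d → ℝ)} (hF : ∀ y ∈ F, ∀ t, 0 ≤ y t)
    {x : Fin d → ℝ} (hx : x ∈ convexHull ℝ F) {T : Set (Fin d)} (hT : ∀ t ∉ T, x t = 0)
    {t0 : Fin d} (ht0 : 0 < x t0) :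
    ∃ y ∈ F, ∃ c : ℝ, 0 < c ∧ (∀ u, c * y u ≤ x u) ∧ 0 < y t0 ∧ ∀ t ∉ T, y t = 0 := by
  rw [convexHull_eq] at hx
  obtain ⟨ι, s, w, f, hw0, hw1, hfF, hcm⟩ := hx
  rw [Finset.centerMass_eq_of_sum_1 _ _ hw1] at hcm
  have happ : ∀ u, x u = ∑ m ∈ s, w m * f m u := by
    intro u; rw [← hcm]; simp
  have hterm : ∀ m ∈ s, ∀ u, 0 ≤ w m * f m u :=
    fun m hm u => mul_nonneg (hw0 m hm) (hF _ (hfF m hm) u)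
  have hex : ∃ m ∈ s, 0 < w m * f m t0 := by
    by_contra hcon; push_neg at hcon
    have : x t0 ≤ 0 := by rw [happ]; exact Finset.sum_nonpos hcon
    linarith
  obtain ⟨m, hm, hpos⟩ := hex
  have hwm : 0 < w m := by
    by_contra hwc; push_neg at hwc
    have : w m = 0 := le_antisymm hwc (hw0 m hm)
    simp [this] at hpos
  have hfpos : 0 < f m t0 := by
    by_contra hfc; push_neg at hfc
    nlinarith [hw0 m hm]
  refine ⟨f m, hfF m hm, w m, hwm, ?_, hfpos, ?_⟩
  · intro u
    rw [happ]
    exact Finset.single_le_sum (fun m' hm' => hterm m' hm' u) hm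
  · intro t ht
    have h0 : ∑ m' ∈ s, w m' * f m' t = 0 := by rw [← happ]; exact hT t ht
    have := (Finset.sum_eq_zero_iff_of_nonneg (fun m' hm' => hterm m' hm' t)).1 h0 m hm
    exact (mul_eq_zero.1 this).resolve_left (ne_of_gt hwm)

/-- Integral points of the edge polytope are exactly the `rho` of edges. -/
lemma integral_mem {d : ℕ} (G : SimpleGraph (Fin d)) (z : Fin d → ℝ)
    (hz : z ∈ edgePolytope G) (hint : ∀ t, ∃ m : ℤ, z t = m) :
    ∃ p q, G.Adj p q ∧ z = rho p q := by
  have hnn : ∀ t, 0 ≤ z t := mem_nonneg hz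
  have hsum : ∑ t, z t = 2 := mem_sum_two hz
  have ht0 : ∃ t0, 0 < z t0 := by
    by_contra hc; push_neg at hc
    have : ∀ t ∈ Finset.univ, z t = 0 := fun t _ => le_antisymm (hc t) (hnn t)
    rw [Finset.sum_congr rfl this] at hsum
    simp at hsum
  obtain ⟨t0, ht0⟩ := ht0
  obtain ⟨y, ⟨p, q, hpq, rfl⟩, c, hc, hdom, -, -⟩ :=
    witness (F := {x : Fin d → ℝ | ∃ i j, G.Adj i j ∧ x = rho i j})
      (fun y hy t => by obtain ⟨i, j, -, rfl⟩ := hy; exact rho_nonneg _ _ _)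
      hz (T := Set.univ) (fun t ht => absurd (Set.mem_univ t) ht) ht0
  have hone : (1 : ℝ) ≤ z p ∧ (1 : ℝ) ≤ z q := by
    constructor
    · have h1 := hdom p
      rw [rho_left hpq.ne] at h1
      obtain ⟨m, hm⟩ := hint p
      have : (0 : ℝ) < m := by rw [← hm]; nlinarith
      have : (1 : ℝ) ≤ m := by exact_mod_cast Int.cast_pos.mp this
      linarith [hm ▸ this]
    · have h1 := hdom q
      rw [rho_right hpq.ne] at h1
      obtain ⟨m, hm⟩ := hint q
      have : (0 : ℝ) < m := by rw [← hm]; nlinarith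
      have : (1 : ℝ) ≤ m := by exact_mod_cast Int.cast_pos.mp this
      linarith [hm ▸ this]
  have hsplit : z p + z q + ∑ t ∈ ({p, q} : Finset (Fin d))ᶜ, z t = 2 := by
    rw [← Finset.sum_pair hpq.ne, Finset.sum_add_sum_compl]
    exact hsum
  have hcompl_nn : 0 ≤ ∑ t ∈ ({p, q} : Finset (Fin d))ᶜ, z t :=
    Finset.sum_nonneg (fun t _ => hnn t)
  have hzp : z p = 1 := by linarith [hone.1, hone.2]
  have hzq : z q = 1 := by linarith [hone.1, hone.2]
  have hcompl0 : ∀ t ∈ ({p, q} : Finset (Fin d))ᶜ, z t = 0 := by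
    have hs0 : ∑ t ∈ ({p, q} : Finset (Fin d))ᶜ, z t = 0 := by linarith
    exact (Finset.sum_eq_zero_iff_of_nonneg (fun t _ => hnn t)).1 hs0
  refine ⟨p, q, hpq, ?_⟩
  funext t
  rcases eq_or_ne t p with rfl | htp
  · rw [hzp, rho_left hpq.ne]
  · rcases eq_or_ne t q with rfl | htq
    · rw [hzq, rho_right hpq.ne]
    · rw [rho_eq_zero htp htq, hcompl0 t (by simp [htp, htq])]

/-- Each closed half-space piece of the edge polytope, if integral, is contained in the
convex hull of the `rho`-vertices lying in that half-space. -/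
lemma piece_subset {d : ℕ} (G : SimpleGraph (Fin d)) (H : Set (Fin d → ℝ))
    (hHconv : Convex ℝ H) (hHcl : IsClosed H)
    (hInt : IsIntegralSet (edgePolytope G ∩ H)) :
    edgePolytope G ∩ H ⊆ convexHull ℝ ({x | ∃ i j, G.Adj i j ∧ x = rho i j} ∩ H) := by
  set S := {x : Fin d → ℝ | ∃ i j, G.Adj i j ∧ x = rho i j} with hS
  set Q := edgePolytope G ∩ H with hQ
  have hQc : IsCompact Q := ((S_finite G).isCompact_convexHull ℝ).inter_right hHcl
  have hQconv : Convex ℝ Q := (convex_convexHull ℝ S).inter hHconv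
  have hext : Set.extremePoints ℝ Q ⊆ S ∩ H := by
    intro v hv
    have hvQ : v ∈ Q := extremePoints_subset hv
    obtain ⟨p, q, hpq, hvrho⟩ := integral_mem G v hvQ.1 (fun t => hInt v hv t)
    exact ⟨⟨p, q, hpq, hvrho⟩, hvQ.2⟩
  calc Q = closure (convexHull ℝ (Set.extremePoints ℝ Q)) :=
        (closure_convexHull_extremePoints hQc hQconv).symm
    _ ⊆ closure (convexHull ℝ (S ∩ H)) := closure_mono (convexHull_mono hext)
    _ = convexHull ℝ (S ∩ H) :=
        IsClosed.closure_eq ((((S_finite G).subset Set.inter_subset_left).isClosed_convexHull ℝ))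

/-- Pick an edge at `t0` inside `T` whose `rho` lies in `H`. -/
lemma pick {d : ℕ} (G : SimpleGraph (Fin d)) (H : Set (Fin d → ℝ)) (x : Fin d → ℝ)
    (hx : x ∈ convexHull ℝ ({x | ∃ i j, G.Adj i j ∧ x = rho i j} ∩ H))
    (T : Set (Fin d)) (hT : ∀ t ∉ T, x t = 0) (t0 : Fin d) (ht0 : 0 < x t0) :
    ∃ s, G.Adj t0 s ∧ s ∈ T ∧ rho t0 s ∈ H := by
  obtain ⟨y, ⟨⟨p, q, hpq, rfl⟩, hyH⟩, c, -, -, hyt0, hyT⟩ :=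
    witness (fun y hy t => by obtain ⟨⟨i, j, -, rfl⟩, -⟩ := hy; exact rho_nonneg _ _ _)
      hx hT ht0
  have ht0pq : t0 = p ∨ t0 = q := by
    by_contra hc; push_neg at hc
    rw [rho_eq_zero hc.1 hc.2] at hyt0
    exact lt_irrefl 0 hyt0
  rcases ht0pq with rfl | rfl
  · refine ⟨q, hpq, ?_, hyH⟩
    by_contra hqT
    have := hyT q hqT
    rw [rho_right hpq.ne] at this
    norm_num at this
  · refine ⟨p, hpq.symm, ?_, by rwa [rho_comm]⟩
    by_contra hpT
    have := hyT p hpT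
    rw [rho_left hpq.ne] at this
    norm_num at this

/-- A positive edge and a negative edge cannot share a vertex. -/
lemma no_share {d : ℕ} (G : SimpleGraph (Fin d)) (a : Fin d → ℝ) (b μ : ℝ)
    (hμ0 : 0 < μ) (hμ1 : μ < 1) (i j k l : Fin d)
    (hij : G.Adj i j) (hkl : G.Adj k l) (hneg : a i + a j < b) (hpos : b < a k + a l)
    (hx : μ • rho i j + (1 - μ) • rho k l ∈
      convexHull ℝ ({x | ∃ p q, G.Adj p q ∧ x = rho p q} ∩ {x | b ≤ dotp a x})) :
    i ≠ k := by
  rintro rfl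
  -- now k = i; edge (i, l) is positive
  have hjl : j ≠ l := by
    rintro rfl; linarith
  have hji : j ≠ i := hij.ne'
  have hil : i ≠ l := hkl.ne
  have hbound : convexHull ℝ ({x | ∃ p q, G.Adj p q ∧ x = rho p q} ∩ {x | b ≤ dotp a x})
      ⊆ {y : Fin d → ℝ | y i + y j ≤ 1} := by
    apply convexHull_min
    · rintro y ⟨⟨p, q, hpq, rfl⟩, hyH⟩
      simp only [Set.mem_setOf_eq] at hyH ⊢
      by_contra hgt; push_neg at hgt
      have hiq : i = p ∨ i = q := by
        by_contra hc; push_neg at hc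
        rw [rho_eq_zero hc.1 hc.2] at hgt
        have := rho_le_one hpq.ne j
        linarith
      have hjq : j = p ∨ j = q := by
        by_contra hc; push_neg at hc
        rw [rho_eq_zero hc.1 hc.2] at hgt
        have := rho_le_one hpq.ne i
        linarith
      have hsame : a p + a q = a i + a j := by
        rcases hiq with rfl | rfl <;> rcases hjq with h | h
        · exact absurd h.symm hji.symm
        · rw [← h]
        · rw [← h]; ring
        · exact absurd h hji
      rw [dotp_rho, hsame] at hyH
      linarith
    · intro u hu v hv α β hα hβ hab
      simp only [Set.mem_setOf_eq] at hu hv ⊢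
      simp only [Pi.add_apply, Pi.smul_apply, smul_eq_mul]
      have h1 := mul_le_mul_of_nonneg_left hu hα
      have h2 := mul_le_mul_of_nonneg_left hv hβ
      nlinarith
  have hle := hbound hx
  simp only [Set.mem_setOf_eq, Pi.add_apply, Pi.smul_apply, smul_eq_mul] at hle
  rw [rho_left hij.ne, rho_right hij.ne, rho_left hil, rho_eq_zero hji hjl] at hle
  linarith

theorem stmt4' {d : ℕ} (G : SimpleGraph (Fin d)) (hG : G.Connected)
    (h : ∃ (a : Fin d → ℝ) (b : ℝ),
      (∃ x ∈ intrinsicInterior ℝ (edgePolytope G), dotp a x = b) ∧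
      (∃ y ∈ edgePolytope G, dotp a y < b) ∧ (∃ y ∈ edgePolytope G, b < dotp a y) ∧
      IsIntegralSet (edgePolytope G ∩ {x | b ≤ dotp a x}) ∧
      IsIntegralSet (edgePolytope G ∩ {x | dotp a x ≤ b})) :
    ∃ p q r s : Fin d, p ≠ q ∧ p ≠ r ∧ p ≠ s ∧ q ≠ r ∧ q ≠ s ∧ r ≠ s ∧
      G.Adj p q ∧ G.Adj q r ∧ G.Adj r s ∧ G.Adj s p := by
  obtain ⟨a, b, -, ⟨y1, hy1P, hy1⟩, ⟨y2, hy2P, hy2⟩, hIntP, hIntM⟩ := h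
  set S := {x : Fin d → ℝ | ∃ i j, G.Adj i j ∧ x = rho i j} with hSdef
  -- existence of a negative edge
  have hneg : ∃ i j, G.Adj i j ∧ a i + a j < b := by
    by_contra hcon; push_neg at hcon
    have hsub : edgePolytope G ⊆ {x | b ≤ dotp a x} :=
      convexHull_min
        (by rintro x ⟨i, j, hij, rfl⟩
            rw [Set.mem_setOf_eq, dotp_rho]; exact hcon i j hij)
        (convex_ge a b)
    exact absurd (hsub hy1P) (by simpa using hy1.not_ge)
  -- existence of a positive edge
  have hpos : ∃ k l, G.Adj k l ∧ b < a k + a l := by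
    by_contra hcon; push_neg at hcon
    have hsub : edgePolytope G ⊆ {x | dotp a x ≤ b} :=
      convexHull_min
        (by rintro x ⟨i, j, hij, rfl⟩
            rw [Set.mem_setOf_eq, dotp_rho]; exact hcon i j hij)
        (convex_le a b)
    exact absurd (hsub hy2P) (by simpa using hy2.not_ge)
  obtain ⟨i, j, hij, hij_neg⟩ := hneg
  obtain ⟨k, l, hkl, hkl_pos⟩ := hpos
  have hD : (0 : ℝ) < a k + a l - (a i + a j) := by linarith
  set μ : ℝ := (a k + a l - b) / (a k + a l - (a i + a j)) with hμdef
  have hμ0 : 0 < μ := div_pos (by linarith) hD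
  have hμ1 : μ < 1 := (div_lt_one hD).2 (by linarith)
  set x : Fin d → ℝ := μ • rho i j + (1 - μ) • rho k l with hxdef
  have hxP : x ∈ edgePolytope G :=
    (convex_convexHull ℝ S) (subset_convexHull ℝ S ⟨i, j, hij, rfl⟩)
      (subset_convexHull ℝ S ⟨k, l, hkl, rfl⟩) hμ0.le (by linarith) (by ring)
  have hxb : dotp a x = b := by
    rw [hxdef, dotp_comb, dotp_rho, dotp_rho]
    have hq : μ * ((a k + a l) - (a i + a j)) = (a k + a l) - b := by
      rw [hμdef]; field_simp
    linear_combination -hq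
  have hxFp : x ∈ convexHull ℝ (S ∩ {x | b ≤ dotp a x}) :=
    piece_subset G _ (convex_ge a b) (isClosed_ge a b) hIntP ⟨hxP, le_of_eq hxb.symm⟩
  have hxFm : x ∈ convexHull ℝ (S ∩ {x | dotp a x ≤ b}) :=
    piece_subset G _ (convex_le a b) (isClosed_le' a b) hIntM ⟨hxP, le_of_eq hxb⟩
  -- the two edges are disjoint
  have hik : i ≠ k := no_share G a b μ hμ0 hμ1 i j k l hij hkl hij_neg hkl_pos hxFp
  have hil : i ≠ l := by
    refine no_share G a b μ hμ0 hμ1 i j l k hij hkl.symm hij_neg (by linarith) ?_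
    rwa [rho_comm l k]
  have hjk : j ≠ k := by
    refine no_share G a b μ hμ0 hμ1 j i k l hij.symm hkl (by linarith) hkl_pos ?_
    rwa [rho_comm j i]
  have hjl : j ≠ l := by
    refine no_share G a b μ hμ0 hμ1 j i l k hij.symm hkl.symm (by linarith) (by linarith) ?_
    rwa [rho_comm j i, rho_comm l k]
  have hijne : i ≠ j := hij.ne
  have hklne : k ≠ l := hkl.ne
  -- coordinates of x
  set T : Set (Fin d) := {i, j, k, l} with hTdef
  have hT : ∀ t ∉ T, x t = 0 := by
    intro t ht
    simp only [hTdef, Set.mem_insert_iff, Set.mem_singleton_iff, not_or] at ht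
    obtain ⟨h1, h2, h3, h4⟩ := ht
    simp [hxdef, rho_eq_zero h1 h2, rho_eq_zero h3 h4]
  have hxi : 0 < x i := by
    have : x i = μ := by
      simp [hxdef, rho_left hijne, rho_eq_zero hik hil]
    rw [this]; exact hμ0
  have hxj : 0 < x j := by
    have : x j = μ := by
      simp [hxdef, rho_right hijne, rho_eq_zero hjk hjl]
    rw [this]; exact hμ0
  have hxk : 0 < x k := by
    have : x k = 1 - μ := by
      simp [hxdef, rho_left hklne, rho_eq_zero hik.symm hjk.symm]
    rw [this]; linarith
  have hxl : 0 < x l := by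
    have : x l = 1 - μ := by
      simp [hxdef, rho_right hklne, rho_eq_zero hil.symm hjl.symm]
    rw [this]; linarith
  -- pick the four edges
  have memT : ∀ s : Fin d, s ∈ T ↔ s = i ∨ s = j ∨ s = k ∨ s = l := by
    intro s; simp [hTdef]
  obtain ⟨s1, hadj1, hs1T, hs1H⟩ := pick G {x | b ≤ dotp a x} x hxFp T hT i hxi
  obtain ⟨s2, hadj2, hs2T, hs2H⟩ := pick G {x | b ≤ dotp a x} x hxFp T hT j hxj
  obtain ⟨s3, hadj3, hs3T, hs3H⟩ := pick G {x | dotp a x ≤ b} x hxFm T hT k hxk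
  obtain ⟨s4, hadj4, hs4T, hs4H⟩ := pick G {x | dotp a x ≤ b} x hxFm T hT l hxl
  rw [Set.mem_setOf_eq, dotp_rho] at hs1H hs2H hs3H hs4H
  have h1 : G.Adj i k ∨ G.Adj i l := by
    rcases (memT s1).1 hs1T with rfl | rfl | rfl | rfl
    · exact absurd rfl hadj1.ne
    · linarith
    · exact Or.inl hadj1
    · exact Or.inr hadj1
  have h2 : G.Adj j k ∨ G.Adj j l := by
    rcases (memT s2).1 hs2T with rfl | rfl | rfl | rfl
    · linarith
    · exact absurd rfl hadj2.ne
    · exact Or.inl hadj2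
    · exact Or.inr hadj2
  have h3 : G.Adj k i ∨ G.Adj k j := by
    rcases (memT s3).1 hs3T with rfl | rfl | rfl | rfl
    · exact Or.inl hadj3
    · exact Or.inr hadj3
    · exact absurd rfl hadj3.ne
    · linarith
  have h4 : G.Adj l i ∨ G.Adj l j := by
    rcases (memT s4).1 hs4T with rfl | rfl | rfl | rfl
    · exact Or.inl hadj4
    · exact Or.inr hadj4
    · linarith
    · exact absurd rfl hadj4.ne
  -- derive the crossing pair
  have hcross : (G.Adj i k ∧ G.Adj j l) ∨ (G.Adj i l ∧ G.Adj j k) := by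
    rcases h1 with hik' | hil'
    · rcases h4 with hli | hlj
      · rcases h2 with hjk' | hjl'
        · exact Or.inr ⟨hli.symm, hjk'⟩
        · exact Or.inl ⟨hik', hjl'⟩
      · exact Or.inl ⟨hik', hlj.symm⟩
    · rcases h3 with hki | hkj
      · rcases h2 with hjk' | hjl'
        · exact Or.inr ⟨hil', hjk'⟩
        · exact Or.inl ⟨hki.symm, hjl'⟩
      · exact Or.inr ⟨hil', hkj.symm⟩
  rcases hcross with ⟨hik', hjl'⟩ | ⟨hil', hjk'⟩
  · exact ⟨i, j, l, k, hijne, hil, hik, hjl, hjk, hklne.symm,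
      hij, hjl', hkl.symm, hik'.symm⟩
  · exact ⟨i, j, k, l, hijne, hik, hil, hjk, hjl, hklne,
      hij, hjk', hkl, hil'.symm⟩

/-- if the edge polytope of a connected graph G is decomposable,
then G contains a cycle of length 4. -/
theorem stmt4 {d : ℕ} (G : SimpleGraph (Fin d)) (hG : G.Connected)
    (h : ∃ (a : Fin d → ℝ) (b : ℝ), Decomposes (edgePolytope G) a b) :
    ∃ p q r s : Fin d, p ≠ q ∧ p ≠ r ∧ p ≠ s ∧ q ≠ r ∧ q ≠ s ∧ r ≠ s ∧
      G.Adj p q ∧ G.Adj q r ∧ G.Adj r s ∧ G.Adj s p := by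
  obtain ⟨a, b, hd⟩ := h
  unfold Decomposes at hd
  exact stmt4' G hG ⟨a, b, hd⟩
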